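/- Let C be a finite simplicial complex, let d' < d be nonnegative integers, and let m ≥ d be an integer with |V(C)| ≥ m. Suppose ρ is a d'-simplex of C that is contained in N simplices of C of dimension d. Then C contains a set of m vertices that spans at least min( N , ((2^{d+1} − 2^{d'+1})/(d − d'))·(m − d) ) nonempty simplices of C. -/

import Mathlib

private lemma pow_ineq_nat (k j : ℕ) (hj : j ≤ k) :
    j * (2 ^ k - 1) ≤ k * (2 ^ k - 2 ^ (k - j)) := by
  have h2 : 2 ^ (k - j) * 2 ^ j = 2 ^ k := by
    rw [← pow_add, Nat.sub_add_cancel hj]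
  have h1 : (1:ℕ) ≤ 2 ^ (k - j) := Nat.one_le_two_pow
  have h3 : 2 ^ (k - j) ≤ 2 ^ k := Nat.pow_le_pow_right (by norm_num) (Nat.sub_le _ _)
  have hsplit : 2 ^ k - 1 = (2 ^ k - 2 ^ (k - j)) + (2 ^ (k - j) - 1) := by omega
  have key : j * (2 ^ (k - j) - 1) ≤ (k - j) * (2 ^ k - 2 ^ (k - j)) := by
    rcases eq_or_lt_of_le hj with rfl | hlt
    · simp
    · have hkj : 1 ≤ k - j := by omega
      calc j * (2 ^ (k - j) - 1) ≤ j * 2 ^ (k - j) :=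
            Nat.mul_le_mul_left _ (Nat.sub_le _ _)
        _ ≤ (2 ^ j - 1) * 2 ^ (k - j) :=
            Nat.mul_le_mul_right _ (by have := (Nat.lt_two_pow_self (n := j)); omega)
        _ = 2 ^ k - 2 ^ (k - j) := by
            rw [Nat.sub_mul, one_mul, mul_comm, h2]
        _ ≤ (k - j) * (2 ^ k - 2 ^ (k - j)) := Nat.le_mul_of_pos_left _ hkj
  calc j * (2 ^ k - 1) = j * (2 ^ k - 2 ^ (k - j)) + j * (2 ^ (k - j) - 1) := by
        rw [hsplit, Nat.mul_add]
    _ ≤ j * (2 ^ k - 2 ^ (k - j)) + (k - j) * (2 ^ k - 2 ^ (k - j)) :=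
        Nat.add_le_add_left key _
    _ = k * (2 ^ k - 2 ^ (k - j)) := by rw [← Nat.add_mul]; congr 1; omega

private lemma rate_ineq (d' d j : ℕ) (hdd : d' < d) (hj : j ≤ d - d') :
    ((2:ℝ) ^ (d+1) - 2 ^ (d'+1)) / ((d:ℝ) - (d':ℝ)) * (j:ℝ)
      ≤ (2:ℝ) ^ (d+1) - 2 ^ (d+1-j) := by
  set k := d - d' with hk
  have hnat := pow_ineq_nat k j hj
  have h1 : (1:ℕ) ≤ 2 ^ k := Nat.one_le_two_pow
  have h3 : 2 ^ (k - j) ≤ 2 ^ k := Nat.pow_le_pow_right (by norm_num) (Nat.sub_le _ _)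
  have hcast : (j:ℝ) * ((2:ℝ) ^ k - 1) ≤ (k:ℝ) * ((2:ℝ) ^ k - 2 ^ (k - j)) := by
    have := (Nat.cast_le (α := ℝ)).2 hnat
    push_cast [Nat.cast_sub h1, Nat.cast_sub h3] at this
    convert this using 2 <;> push_cast <;> ring
  have hdpos : (0:ℝ) < (d:ℝ) - (d':ℝ) := by
    have : (d':ℝ) < d := by exact_mod_cast hdd
    linarith
  have hdk : (d:ℝ) - (d':ℝ) = (k:ℝ) := by
    rw [hk]; push_cast [Nat.cast_sub hdd.le]; ring
  have e1 : (2:ℝ) ^ (d+1) = 2 ^ (d'+1) * 2 ^ k := by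
    rw [← pow_add]; congr 1; omega
  have e2 : (2:ℝ) ^ (d+1-j) = 2 ^ (d'+1) * 2 ^ (k-j) := by
    rw [← pow_add]; congr 1; omega
  rw [div_mul_eq_mul_div, div_le_iff₀ hdpos, e1, e2, hdk]
  nlinarith [hcast, pow_pos (by norm_num : (0:ℝ) < 2) (d'+1)]

private lemma count_step {V : Type*} [DecidableEq V]
    (C : Finset (Finset V)) (hC : ∀ σ ∈ C, ∀ τ ⊆ σ, τ ∈ C)
    (W σ : Finset V) (hσ : σ ∈ C) :
    (C.filter (fun τ => τ.Nonempty ∧ τ ⊆ W)).card + (2 ^ σ.card - 2 ^ (σ ∩ W).card)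
      ≤ (C.filter (fun τ => τ.Nonempty ∧ τ ⊆ W ∪ σ)).card := by
  classical
  set A := C.filter (fun τ => τ.Nonempty ∧ τ ⊆ W) with hA
  set D := σ.powerset.filter (fun τ => ¬ τ ⊆ W) with hD
  have hDcard : D.card = 2 ^ σ.card - 2 ^ (σ ∩ W).card := by
    have h0 := Finset.card_filter_add_card_filter_not
      (s := σ.powerset) (p := fun τ => τ ⊆ W)
    have h1 : σ.powerset.filter (fun τ => τ ⊆ W) = (σ ∩ W).powerset := by
      ext τ
      simp only [Finset.mem_filter, Finset.mem_powerset, Finset.subset_inter_iff]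
    rw [h1] at h0
    have h4 := Finset.card_powerset σ
    have h5 := Finset.card_powerset (σ ∩ W)
    have h6 : 2 ^ (σ ∩ W).card ≤ 2 ^ σ.card :=
      Nat.pow_le_pow_right (by norm_num) (Finset.card_le_card Finset.inter_subset_left)
    have h7 : (Finset.filter (fun a => ¬a ⊆ W) σ.powerset).card = D.card := rfl
    omega
  have hsub : A ∪ D ⊆ C.filter (fun τ => τ.Nonempty ∧ τ ⊆ W ∪ σ) := by
    intro τ hτ
    rcases Finset.mem_union.1 hτ with h | h
    · simp only [hA, Finset.mem_filter] at h
      exact Finset.mem_filter.2 ⟨h.1, h.2.1, h.2.2.trans Finset.subset_union_left⟩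
    · simp only [hD, Finset.mem_filter, Finset.mem_powerset] at h
      refine Finset.mem_filter.2 ⟨hC σ hσ τ h.1, ?_, h.1.trans Finset.subset_union_right⟩
      rcases Finset.eq_empty_or_nonempty τ with rfl | hne
      · exact absurd (Finset.empty_subset W) h.2
      · exact hne
  have hdisj : Disjoint A D := by
    rw [Finset.disjoint_left]
    intro τ hτA hτD
    simp only [hA, Finset.mem_filter] at hτA
    simp only [hD, Finset.mem_filter] at hτD
    exact hτD.2 hτA.2.2
  calc A.card + (2 ^ σ.card - 2 ^ (σ ∩ W).card) = A.card + D.card := by rw [hDcard]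
    _ = (A ∪ D).card := (Finset.card_union_of_disjoint hdisj).symm
    _ ≤ _ := Finset.card_le_card hsub

private lemma grow {V : Type*} [DecidableEq V] [Fintype V]
    (C : Finset (Finset V)) (hC : ∀ σ ∈ C, ∀ τ ⊆ σ, τ ∈ C)
    (d' d m : ℕ) (hdd : d' < d)
    (ρ : Finset V) (hρcard : ρ.card = d' + 1) :
    ∀ n (W : Finset V), m - W.card ≤ n → ρ ⊆ W → W ⊆ C.sup id → W.card ≤ m →
    ∃ W' : Finset V, W ⊆ W' ∧ W' ⊆ C.sup id ∧ W'.card ≤ m ∧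
      ((∀ σ ∈ C.filter (fun τ => ρ ⊆ τ ∧ τ.card = d + 1), σ ⊆ W') ∨
       (m < W'.card + (d - d') ∧
        ((C.filter (fun τ => τ.Nonempty ∧ τ ⊆ W)).card : ℝ) +
          ((2:ℝ) ^ (d+1) - 2 ^ (d'+1)) / ((d:ℝ) - (d':ℝ)) * ((W'.card : ℝ) - (W.card : ℝ))
          ≤ ((C.filter (fun τ => τ.Nonempty ∧ τ ⊆ W')).card : ℝ))) := by
  intro n
  induction n with
  | zero =>
    intro W hn hρW hWV hWm
    refine ⟨W, subset_rfl, hWV, hWm, ?_⟩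
    have hWm' : W.card = m := by omega
    by_cases hall : ∀ σ ∈ C.filter (fun τ => ρ ⊆ τ ∧ τ.card = d + 1), σ ⊆ W
    · exact Or.inl hall
    · push_neg at hall
      obtain ⟨σ, hσf, hσW⟩ := hall
      simp only [Finset.mem_filter] at hσf
      obtain ⟨hσC, hρσ, hσcard⟩ := hσf
      have hne : (σ \ W).Nonempty := by rwa [Finset.sdiff_nonempty]
      have hj1 : 1 ≤ (σ \ W).card := Finset.card_pos.2 hne
      have hj2 : (σ \ W).card ≤ d - d' := by
        have hsub : σ \ W ⊆ σ \ ρ := Finset.sdiff_subset_sdiff subset_rfl hρW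
        have := Finset.card_le_card hsub
        have hcρ : (σ \ ρ).card = σ.card - ρ.card := Finset.card_sdiff_of_subset hρσ
        omega
      refine Or.inr ⟨by omega, ?_⟩
      simp only [sub_self, mul_zero, add_zero, le_refl]
  | succ n ih =>
    intro W hn hρW hWV hWm
    by_cases hex : ∃ σ ∈ C.filter (fun τ => ρ ⊆ τ ∧ τ.card = d + 1),
        ¬ σ ⊆ W ∧ (W ∪ σ).card ≤ m
    · obtain ⟨σ, hσf, hσW, hσm⟩ := hex
      simp only [Finset.mem_filter] at hσf
      obtain ⟨hσC, hρσ, hσcard⟩ := hσf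
      set j := (σ \ W).card with hj
      have hunion : j + W.card = (W ∪ σ).card := by
        rw [Finset.union_comm]; exact Finset.card_sdiff_add_card σ W
      have hne : (σ \ W).Nonempty := by rwa [Finset.sdiff_nonempty]
      have hj1 : 1 ≤ j := Finset.card_pos.2 hne
      have hj2 : j ≤ d - d' := by
        have hsub : σ \ W ⊆ σ \ ρ := Finset.sdiff_subset_sdiff subset_rfl hρW
        have := Finset.card_le_card hsub
        have hcρ : (σ \ ρ).card = σ.card - ρ.card := Finset.card_sdiff_of_subset hρσ
        omega
      have hσV : σ ⊆ C.sup id := Finset.le_sup (f := id) hσC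
      have hW1V : W ∪ σ ⊆ C.sup id := Finset.union_subset hWV hσV
      have hρW1 : ρ ⊆ W ∪ σ := hρW.trans Finset.subset_union_left
      have hn1 : m - (W ∪ σ).card ≤ n := by omega
      obtain ⟨W', h1, h2, h3, h4⟩ := ih (W ∪ σ) hn1 hρW1 hW1V hσm
      refine ⟨W', Finset.subset_union_left.trans h1, h2, h3, ?_⟩
      rcases h4 with h4 | ⟨ha, hb⟩
      · exact Or.inl h4
      · refine Or.inr ⟨ha, ?_⟩
        have hstep := count_step C hC W σ hσC
        have hiw : (σ ∩ W).card = d + 1 - j := by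
          have := Finset.card_inter_add_card_sdiff σ W
          omega
        have hple : 2 ^ (d + 1 - j) ≤ 2 ^ (d + 1) := by
          exact Nat.pow_le_pow_right (by norm_num) (Nat.sub_le _ _)
        have hstepR : ((C.filter (fun τ => τ.Nonempty ∧ τ ⊆ W)).card : ℝ) +
            ((2:ℝ) ^ (d+1) - 2 ^ (d+1-j))
            ≤ ((C.filter (fun τ => τ.Nonempty ∧ τ ⊆ W ∪ σ)).card : ℝ) := by
          rw [hσcard, hiw] at hstep
          have := (Nat.cast_le (α := ℝ)).2 hstep
          push_cast [Nat.cast_sub hple] at this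
          linarith
        have hrate := rate_ineq d' d j hdd hj2
        have hc1 : ((W ∪ σ).card : ℝ) = (W.card : ℝ) + (j : ℝ) := by
          rw [← hunion]; push_cast; ring
        have hexp : ((2:ℝ) ^ (d+1) - 2 ^ (d'+1)) / ((d:ℝ) - (d':ℝ)) *
              ((W'.card : ℝ) - (W.card : ℝ))
            = ((2:ℝ) ^ (d+1) - 2 ^ (d'+1)) / ((d:ℝ) - (d':ℝ)) * (j:ℝ)
            + ((2:ℝ) ^ (d+1) - 2 ^ (d'+1)) / ((d:ℝ) - (d':ℝ)) *
              ((W'.card : ℝ) - ((W ∪ σ).card : ℝ)) := by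
          rw [hc1]; ring
        rw [hexp]
        linarith
    · push_neg at hex
      refine ⟨W, subset_rfl, hWV, hWm, ?_⟩
      by_cases hall : ∀ σ ∈ C.filter (fun τ => ρ ⊆ τ ∧ τ.card = d + 1), σ ⊆ W
      · exact Or.inl hall
      · push_neg at hall
        obtain ⟨σ, hσf, hσW⟩ := hall
        have hm := hex σ hσf hσW
        simp only [Finset.mem_filter] at hσf
        obtain ⟨hσC, hρσ, hσcard⟩ := hσf
        have hunion : (σ \ W).card + W.card = (W ∪ σ).card := by
          rw [Finset.union_comm]; exact Finset.card_sdiff_add_card σ W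
        have hj2 : (σ \ W).card ≤ d - d' := by
          have hsub : σ \ W ⊆ σ \ ρ := Finset.sdiff_subset_sdiff subset_rfl hρW
          have := Finset.card_le_card hsub
          have hcρ : (σ \ ρ).card = σ.card - ρ.card := Finset.card_sdiff_of_subset hρσ
          omega
        refine Or.inr ⟨by omega, ?_⟩
        simp only [sub_self, mul_zero, add_zero, le_refl]

/-- **Lemma (overlap of d-simplices).** Let `C` be a finite simplicial complex, let
`d' < d` and `m ≥ d` with `|V(C)| ≥ m`, and suppose the `d'`-simplex `ρ ∈ C` is
contained in `N` simplices of `C` of dimension `d`.  Then some `m` vertices of `C`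
span at least `min(N, ((2^(d+1) − 2^(d'+1))/(d − d'))·(m − d))` nonempty simplices. -/
theorem overlap_lemma {V : Type*} [DecidableEq V] [Fintype V]
    (C : Finset (Finset V)) (hC : ∀ σ ∈ C, ∀ τ ⊆ σ, τ ∈ C)
    (d' d m N : ℕ) (hdd : d' < d) (hmd : d ≤ m) (hmV : m ≤ (C.sup id).card)
    (ρ : Finset V) (hρ : ρ ∈ C) (hρcard : ρ.card = d' + 1)
    (hN : (C.filter (fun τ => ρ ⊆ τ ∧ τ.card = d + 1)).card = N) :
    ∃ W : Finset V, W ⊆ C.sup id ∧ W.card = m ∧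
      min (N : ℝ)
        (((2 : ℝ) ^ (d + 1) - 2 ^ (d' + 1)) / ((d : ℝ) - (d' : ℝ)) * ((m : ℝ) - d)) ≤
      ((C.filter (fun σ => σ.Nonempty ∧ σ ⊆ W)).card : ℝ) := by

  have hρV : ρ ⊆ C.sup id := Finset.le_sup (f := id) hρ
  have hρm : ρ.card ≤ m := by omega
  obtain ⟨W', hρW', hW'V, hW'm, hcase⟩ :=
    grow C hC d' d m hdd ρ hρcard m ρ (Nat.sub_le _ _) subset_rfl hρV hρm
  obtain ⟨W, hW'W, hWV, hWcard⟩ := Finset.exists_subsuperset_card_eq hW'V hW'm hmV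
  refine ⟨W, hWV, hWcard, ?_⟩
  have hmono : ((C.filter (fun τ => τ.Nonempty ∧ τ ⊆ W')).card : ℝ)
      ≤ ((C.filter (fun σ => σ.Nonempty ∧ σ ⊆ W)).card : ℝ) := by
    have : C.filter (fun τ => τ.Nonempty ∧ τ ⊆ W') ⊆
        C.filter (fun σ => σ.Nonempty ∧ σ ⊆ W) := by
      intro τ hτ
      simp only [Finset.mem_filter] at hτ ⊢
      exact ⟨hτ.1, hτ.2.1, hτ.2.2.trans hW'W⟩
    exact_mod_cast Finset.card_le_card this
  rcases hcase with hall | ⟨hm, hg⟩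
  · refine (min_le_left _ _).trans ?_
    have hsub : C.filter (fun τ => ρ ⊆ τ ∧ τ.card = d + 1) ⊆
        C.filter (fun σ => σ.Nonempty ∧ σ ⊆ W) := by
      intro σ hσ
      have hσ' := hσ
      simp only [Finset.mem_filter] at hσ' ⊢
      refine ⟨hσ'.1, Finset.card_pos.1 (by omega), (hall σ hσ).trans hW'W⟩
    have := Finset.card_le_card hsub
    rw [hN] at this
    exact_mod_cast this
  · refine (min_le_right _ _).trans ?_
    set c : ℝ := ((2 : ℝ) ^ (d + 1) - 2 ^ (d' + 1)) / ((d : ℝ) - (d' : ℝ)) with hc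
    have hcnn : 0 ≤ c := by
      apply div_nonneg
      · have : (2:ℝ) ^ (d' + 1) ≤ 2 ^ (d + 1) :=
          pow_le_pow_right₀ (by norm_num) (by omega)
        linarith
      · have : (d':ℝ) < d := by exact_mod_cast hdd
        linarith
    have hkey : m + d' + 1 ≤ W'.card + d := by omega
    have hle : (m : ℝ) - d ≤ (W'.card : ℝ) - ((ρ.card : ℝ)) := by
      rw [hρcard]
      have h := (Nat.cast_le (α := ℝ)).2 hkey
      push_cast at h ⊢
      linarith
    have h1 : c * ((m : ℝ) - d) ≤ c * ((W'.card : ℝ) - (ρ.card : ℝ)) :=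
      mul_le_mul_of_nonneg_left hle hcnn
    have h0 : (0:ℝ) ≤ ((C.filter (fun τ => τ.Nonempty ∧ τ ⊆ ρ)).card : ℝ) := by positivity
    linarith
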